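/- Let R be a commutative ring with p·R of square zero (e.g. R flat over ℤ/p²ℤ), a, b, A, B ∈ R with A ≡ a^p and B ≡ b^p modulo pR, and a, A invertible. Then in R[y], the polynomial ((a y + b)^p − B)·A^{−1} equals y^p + δ where δ ∈ p·R[y] and every monomial of δ has degree ≤ p. -/

import Mathlib

open Polynomial

/-- Let `R` be a commutative ring in which `pR` has square zero and `p·(pR) = 0`
(e.g. `R` flat over `ℤ/p²ℤ`), let `a, b, A, B ∈ R` with `A ≡ a^p` and `B ≡ b^p`
modulo `pR`, and suppose `a` and `A` are invertible, with `Ainv` the inverse of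
`A`.  Then in `R[y]` we have `((a·y + b)^p − B)·A⁻¹ = y^p + δ`, where all
coefficients of `δ` lie in `pR` and every monomial of `δ` has degree `≤ p`. -/
theorem stmt18 (p : ℕ) (hp : p.Prime) (R : Type*) [CommRing R]
    (hsq : ∀ x y : R, x ∈ Ideal.span {(p : R)} → y ∈ Ideal.span {(p : R)} → x * y = 0)
    (hpp : ∀ x : R, x ∈ Ideal.span {(p : R)} → (p : R) * x = 0)
    (a b A B : R)
    (hA : A - a ^ p ∈ Ideal.span {(p : R)}) (hB : B - b ^ p ∈ Ideal.span {(p : R)})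
    (ha : IsUnit a) (Ainv : R) (hAinv : A * Ainv = 1) :
    ∃ δ : Polynomial R,
      ((C a * X + C b) ^ p - C B) * C Ainv = X ^ p + δ ∧
      (∀ i, δ.coeff i ∈ Ideal.span {(p : R)}) ∧
      δ.natDegree ≤ p := by
  set I : Ideal R := Ideal.span {(p : R)} with hI
  refine ⟨((C a * X + C b) ^ p - C B) * C Ainv - X ^ p, by ring, ?_, ?_⟩
  · -- coefficients lie in I : pass to the quotient
    intro i
    have hpI : (p : R) ∈ I := Ideal.subset_span rfl
    let q := Ideal.Quotient.mk I
    have key : Polynomial.map q (((C a * X + C b) ^ p - C B) * C Ainv - X ^ p) = 0 := by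
      have hpq : (p : R ⧸ I) = 0 := by
        have : q (p : R) = 0 := (Ideal.Quotient.eq_zero_iff_mem).2 hpI
        simpa using this
      have hAq : q A = q a ^ p := by
        rw [← map_pow]
        exact (Ideal.Quotient.eq).2 hA
      have hBq : q B = q b ^ p := by
        rw [← map_pow]
        exact (Ideal.Quotient.eq).2 hB
      have hAinvq : q A * q Ainv = 1 := by rw [← map_mul, hAinv, map_one]
      have frob : (C (q a) * X + C (q b)) ^ p
          = C (q a) ^ p * X ^ p + C (q b) ^ p := by
        rw [add_pow_prime_eq hp]
        have : ((p : ℕ) : (R ⧸ I)[X]) = 0 := by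
          rw [← C_eq_natCast, hpq, map_zero]
        rw [this]
        simp only [zero_mul, add_zero]
        rw [mul_pow]
      simp only [Polynomial.map_sub, Polynomial.map_mul, Polynomial.map_pow,
        Polynomial.map_add, Polynomial.map_C, Polynomial.map_X]
      rw [frob, ← C_pow, ← C_pow, ← hAq, ← hBq, add_sub_cancel_right]
      have h3 : C (q A) * X ^ p * C (q Ainv) = C (q A * q Ainv) * X ^ p := by
        rw [C_mul]; ring
      rw [h3, hAinvq, map_one, one_mul, sub_self]
    have := congrArg (fun f => f.coeff i) key
    simp only [Polynomial.coeff_map, Polynomial.coeff_zero] at this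
    exact (Ideal.Quotient.eq_zero_iff_mem).1 this
  · -- degree bound
    have h1 : (((C a * X + C b) ^ p - C B) * C Ainv).natDegree ≤ p := by
      compute_degree
    have h2 : (X ^ p : Polynomial R).natDegree ≤ p := natDegree_X_pow_le p
    exact le_trans (natDegree_sub_le _ _) (max_le h1 h2)
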